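/- arXiv:1005.1334 — 2 statements merged into one kernel-verified Lean document; each statement's English description precedes it below -/
import Mathlib

section
/- Let α > 0, ζ ∈ ℝ, and define f₁(v) = ₁F₂(ζ/4; 1/2, 3/4; v⁴/(16α)) for v ∈ ℝ, where ₁F₂(a; b₁, b₂; z) = ∑_{n≥0} (a)ₙ zⁿ / ((b₁)ₙ (b₂)ₙ n!). Then f₁ satisfies the third-order ODE α·f₁'''(v) − v²·f₁'(v) − ζ·v·f₁(v) = 0 for all v ∈ ℝ. -/
open Real

/-- Pochhammer symbol `(a)ₙ = a(a+1)⋯(a+n-1)`. -/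
noncomputable def poch (a : ℝ) (n : ℕ) : ℝ := ∏ i ∈ Finset.range n, (a + i)

lemma poch_succ (a : ℝ) (n : ℕ) : poch a (n + 1) = poch a n * (a + n) :=
  Finset.prod_range_succ _ _
lemma poch_pos {a : ℝ} (ha : 0 < a) (n : ℕ) : 0 < poch a n :=
  Finset.prod_pos fun i _ => by positivity
noncomputable def Acoef (α ζ : ℝ) (n : ℕ) : ℝ :=
  poch (ζ / 4) n / (poch (1 / 2) n * poch (3 / 4) n * n.factorial * (16 * α) ^ n)

lemma Acoef_mul (α ζ : ℝ) (hα : 0 < α) (n : ℕ) :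
    Acoef α ζ (n + 1) * ((1 / 2 + n) * (3 / 4 + n) * (n + 1) * (16 * α)) =
      Acoef α ζ n * (ζ / 4 + n) := by
  have h1 := poch_pos (by norm_num : (0:ℝ) < 1/2) n
  have h2 := poch_pos (by norm_num : (0:ℝ) < 3/4) n
  have h3 : (0:ℝ) < n.factorial := by exact_mod_cast n.factorial_pos
  have h4 : (0:ℝ) < (16 * α) ^ n := by positivity
  have h5 : (0:ℝ) < (n:ℝ) + 1 := by positivity
  unfold Acoef
  rw [poch_succ, poch_succ, poch_succ, Nat.factorial_succ, pow_succ]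
  push_cast
  field_simp

lemma summable_major (α ζ : ℝ) (hα : 0 < α) (R : ℝ) (hR : 1 ≤ R) :
    Summable (fun n : ℕ => |Acoef α ζ n| * (4 * (n:ℝ) + 1) ^ 4 * R ^ (4 * n)) := by
  have hR0 : (0:ℝ) < R := lt_of_lt_of_le one_pos hR
  obtain ⟨N, hN⟩ := exists_nat_ge (max (|ζ| / 4 + 1) (Real.sqrt (4 * R ^ 4 / α)))
  apply summable_of_ratio_norm_eventually_le (r := 1/2) (by norm_num)
  filter_upwards [Filter.eventually_ge_atTop N] with n hn
  have hnN : (N:ℝ) ≤ n := by exact_mod_cast hn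
  have hmax := le_trans hN hnN
  have hn2 : |ζ| / 4 + 1 ≤ (n:ℝ) := le_trans (le_max_left _ _) hmax
  have hn1 : (1:ℝ) ≤ n := by
    have : (0:ℝ) ≤ |ζ| / 4 := by positivity
    linarith
  have hn3 : 4 * R ^ 4 ≤ α * (n:ℝ) ^ 2 := by
    have hs := le_trans (le_max_right _ _) hmax
    have h0 : (0:ℝ) ≤ 4 * R ^ 4 / α := by positivity
    have h1 : 4 * R ^ 4 / α ≤ (n:ℝ) ^ 2 := by
      rw [← Real.sq_sqrt h0]
      exact pow_le_pow_left₀ (Real.sqrt_nonneg _) hs 2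
    calc 4 * R ^ 4 = 4 * R ^ 4 / α * α := by field_simp
      _ ≤ (n:ℝ) ^ 2 * α := mul_le_mul_of_nonneg_right h1 hα.le
      _ = α * (n:ℝ) ^ 2 := mul_comm _ _
  set D : ℝ := (1 / 2 + (n:ℝ)) * (3 / 4 + n) * (n + 1) * (16 * α) with hDdef
  have hD : (0:ℝ) < D := by positivity
  have habs : |Acoef α ζ (n+1)| * D = |Acoef α ζ n| * |ζ/4 + (n:ℝ)| := by
    have h := Acoef_mul α ζ hα n
    rw [← abs_of_pos hD, ← abs_mul, hDdef, h, abs_mul]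
  have e1 : |ζ/4 + (n:ℝ)| ≤ 2 * n := by
    calc |ζ/4 + (n:ℝ)| ≤ |ζ/4| + |(n:ℝ)| := abs_add_le _ _
      _ = |ζ|/4 + n := by
          rw [abs_div, abs_of_nonneg (by positivity : (0:ℝ) ≤ (n:ℝ))]; norm_num
      _ ≤ 2 * n := by linarith
  have e2 : (4 * (n:ℝ) + 5) ^ 4 ≤ 16 * (4 * n + 1) ^ 4 := by
    have h45 : (4 * (n:ℝ) + 5) ≤ 2 * (4 * n + 1) := by linarith
    calc (4 * (n:ℝ) + 5) ^ 4 ≤ (2 * (4 * n + 1)) ^ 4 :=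
          pow_le_pow_left₀ (by linarith) h45 4
      _ = 16 * (4 * n + 1) ^ 4 := by ring
  have hX : (0:ℝ) < (4 * (n:ℝ) + 1) ^ 4 := by positivity
  have inner : 32 * (n:ℝ) * R ^ 4 ≤ 1/2 * D := by
    have h8 : 8 * (n:ℝ) * (4 * R ^ 4) ≤ 8 * n * (α * n ^ 2) :=
      mul_le_mul_of_nonneg_left hn3 (by positivity)
    have hprod : 8 * α * (n:ℝ)^3 ≤ 8 * α * ((1/2 + n) * (3/4 + n) * (n + 1)) := by
      have hexp : (1/2 + (n:ℝ)) * (3/4 + n) * (n + 1) - n^3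
          = 9/4 * n^2 + 13/8 * n + 3/8 := by ring
      nlinarith [sq_nonneg (n:ℝ), (by positivity : (0:ℝ) ≤ (n:ℝ)), hα.le,
        mul_nonneg hα.le (sq_nonneg (n:ℝ)), mul_nonneg hα.le (Nat.cast_nonneg n : (0:ℝ) ≤ n)]
    have : 1/2 * D = 8 * α * ((1/2 + (n:ℝ)) * (3/4 + n) * (n + 1)) := by rw [hDdef]; ring
    nlinarith [h8, hprod]
  have hkey : |ζ/4 + (n:ℝ)| * ((4 * n + 5) ^ 4 * R ^ 4)
      ≤ 1/2 * (4 * (n:ℝ) + 1) ^ 4 * D := by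
    calc |ζ/4 + (n:ℝ)| * ((4 * n + 5) ^ 4 * R ^ 4)
        ≤ (2 * n) * ((16 * (4 * (n:ℝ) + 1) ^ 4) * R ^ 4) := by
          apply mul_le_mul e1 (mul_le_mul_of_nonneg_right e2 (by positivity))
            (by positivity) (by positivity)
      _ = (32 * (n:ℝ) * R ^ 4) * (4 * n + 1) ^ 4 := by ring
      _ ≤ (1/2 * D) * (4 * n + 1) ^ 4 := mul_le_mul_of_nonneg_right inner hX.le
      _ = 1/2 * (4 * (n:ℝ) + 1) ^ 4 * D := by ring
  have hA1 : (0:ℝ) ≤ |Acoef α ζ (n+1)| * (4 * ((n+1:ℕ):ℝ) + 1) ^ 4 * R ^ (4 * (n+1)) :=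
    mul_nonneg (mul_nonneg (abs_nonneg _) (by positivity)) (pow_nonneg hR0.le _)
  have hA2 : (0:ℝ) ≤ |Acoef α ζ n| * (4 * (n:ℝ) + 1) ^ 4 * R ^ (4 * n) :=
    mul_nonneg (mul_nonneg (abs_nonneg _) (by positivity)) (pow_nonneg hR0.le _)
  rw [Real.norm_eq_abs, Real.norm_eq_abs, abs_of_nonneg hA1, abs_of_nonneg hA2]
  rw [← mul_le_mul_iff_of_pos_right hD]
  calc |Acoef α ζ (n+1)| * (4 * ((n+1:ℕ):ℝ) + 1) ^ 4 * R ^ (4 * (n+1)) * D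
      = (|Acoef α ζ (n+1)| * D) * ((4 * (n:ℝ) + 5) ^ 4 * (R ^ (4*n) * R ^ 4)) := by
        push_cast
        rw [show 4 * (n + 1) = 4 * n + 4 by ring, pow_add]
        ring
    _ = (|Acoef α ζ n| * R ^ (4*n)) * (|ζ/4 + (n:ℝ)| * ((4 * n + 5) ^ 4 * R ^ 4)) := by
        rw [habs]; ring
    _ ≤ (|Acoef α ζ n| * R ^ (4*n)) * (1/2 * (4 * (n:ℝ) + 1) ^ 4 * D) := by
        exact mul_le_mul_of_nonneg_left hkey
          (mul_nonneg (abs_nonneg _) (pow_nonneg hR0.le _))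
    _ = 1/2 * (|Acoef α ζ n| * (4 * (n:ℝ) + 1) ^ 4 * R ^ (4*n)) * D := by ring

lemma norm_deriv_term_le (α ζ : ℝ) (c : ℕ → ℝ) (k : ℕ → ℕ)
    (hk : ∀ n, k n ≤ 4 * n)
    (hc : ∀ n, |c n| ≤ |Acoef α ζ n| * (4 * (n:ℝ) + 1) ^ 3)
    (R y : ℝ) (hR : 1 ≤ R) (hy : |y| ≤ R) (n : ℕ) :
    ‖c n * (k n : ℝ) * y ^ (k n - 1)‖ ≤ |Acoef α ζ n| * (4 * (n:ℝ) + 1) ^ 4 * R ^ (4 * n) := by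
  have hR0 : (0:ℝ) < R := lt_of_lt_of_le one_pos hR
  have h1 : (0:ℝ) ≤ 4 * (n:ℝ) + 1 := by positivity
  have hken : (k n : ℝ) ≤ 4 * (n:ℝ) + 1 := by
    have : (k n : ℝ) ≤ ((4 * n : ℕ) : ℝ) := by exact_mod_cast hk n
    push_cast at this; linarith
  have hpow : |y| ^ (k n - 1) ≤ R ^ (4 * n) := by
    calc |y| ^ (k n - 1) ≤ R ^ (k n - 1) := pow_le_pow_left₀ (abs_nonneg _) hy _
      _ ≤ R ^ (4 * n) := pow_le_pow_right₀ hR (le_trans (Nat.sub_le _ _) (hk n))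
  rw [Real.norm_eq_abs, abs_mul, abs_mul, abs_of_nonneg (Nat.cast_nonneg (k n) : (0:ℝ) ≤ (k n : ℝ)), abs_pow]
  calc |c n| * (k n : ℝ) * |y| ^ (k n - 1)
      ≤ (|Acoef α ζ n| * (4 * (n:ℝ) + 1) ^ 3) * (4 * (n:ℝ) + 1) * R ^ (4 * n) := by
        apply mul_le_mul _ hpow (by positivity) (by positivity)
        exact mul_le_mul (hc n) hken (Nat.cast_nonneg _) (by positivity)
    _ = |Acoef α ζ n| * (4 * (n:ℝ) + 1) ^ 4 * R ^ (4 * n) := by ring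

lemma norm_plain_term_le (α ζ : ℝ) (c : ℕ → ℝ) (k : ℕ → ℕ)
    (hk : ∀ n, k n ≤ 4 * n)
    (hc : ∀ n, |c n| ≤ |Acoef α ζ n| * (4 * (n:ℝ) + 1) ^ 3)
    (R y : ℝ) (hR : 1 ≤ R) (hy : |y| ≤ R) (n : ℕ) :
    ‖c n * y ^ (k n)‖ ≤ |Acoef α ζ n| * (4 * (n:ℝ) + 1) ^ 4 * R ^ (4 * n) := by
  have hR0 : (0:ℝ) < R := lt_of_lt_of_le one_pos hR
  have h1 : (1:ℝ) ≤ 4 * (n:ℝ) + 1 := by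
    have : (0:ℝ) ≤ (n:ℝ) := Nat.cast_nonneg n
    linarith
  have hpow : |y| ^ (k n) ≤ R ^ (4 * n) := by
    calc |y| ^ (k n) ≤ R ^ (k n) := pow_le_pow_left₀ (abs_nonneg _) hy _
      _ ≤ R ^ (4 * n) := pow_le_pow_right₀ hR (hk n)
  rw [Real.norm_eq_abs, abs_mul, abs_pow]
  calc |c n| * |y| ^ (k n)
      ≤ (|Acoef α ζ n| * (4 * (n:ℝ) + 1) ^ 3) * R ^ (4 * n) :=
        mul_le_mul (hc n) hpow (by positivity) (by positivity)
    _ ≤ |Acoef α ζ n| * (4 * (n:ℝ) + 1) ^ 4 * R ^ (4 * n) := by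
        have h34 : (4 * (n:ℝ) + 1) ^ 3 ≤ (4 * (n:ℝ) + 1) ^ 4 :=
          pow_le_pow_right₀ h1 (by norm_num)
        have := mul_le_mul_of_nonneg_left h34 (abs_nonneg (Acoef α ζ n))
        nlinarith [pow_nonneg hR0.le (4*n)]

lemma summable_gen (α ζ : ℝ) (hα : 0 < α) (c : ℕ → ℝ) (k : ℕ → ℕ)
    (hk : ∀ n, k n ≤ 4 * n)
    (hc : ∀ n, |c n| ≤ |Acoef α ζ n| * (4 * (n:ℝ) + 1) ^ 3) (x : ℝ) :
    Summable (fun n => c n * x ^ (k n)) := by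
  have hR : (1:ℝ) ≤ |x| + 1 := by have := abs_nonneg x; linarith
  exact Summable.of_norm_bounded (summable_major α ζ hα (|x|+1) hR)
    (norm_plain_term_le α ζ c k hk hc (|x|+1) x hR (by linarith [abs_nonneg x]))

lemma hasDerivAt_tsum_gen (α ζ : ℝ) (hα : 0 < α) (c : ℕ → ℝ) (k : ℕ → ℕ)
    (hk : ∀ n, k n ≤ 4 * n)
    (hc : ∀ n, |c n| ≤ |Acoef α ζ n| * (4 * (n:ℝ) + 1) ^ 3) (x : ℝ) :
    HasDerivAt (fun y => ∑' n, c n * y ^ (k n))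
      (∑' n, c n * (k n : ℝ) * x ^ (k n - 1)) x := by
  set R : ℝ := |x| + 1 with hRdef
  have hR : (1:ℝ) ≤ R := by rw [hRdef]; linarith [abs_nonneg x]
  have hxmem : x ∈ Metric.ball (0:ℝ) R := by
    simp [Metric.mem_ball, Real.dist_eq, hRdef]
  refine hasDerivAt_tsum_of_isPreconnected
    (g := fun n y => c n * y ^ (k n))
    (g' := fun n y => c n * (k n : ℝ) * y ^ (k n - 1))
    (summable_major α ζ hα R hR)
    Metric.isOpen_ball ((convex_ball (0:ℝ) R).isPreconnected)
    (fun n y _ => ?_) (fun n y hy => ?_) hxmem ?_ hxmem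
  · simpa [mul_assoc] using (hasDerivAt_pow (k n) y).const_mul (c n)
  · have hyR : |y| ≤ R := by
      have := Metric.mem_ball.1 hy
      rw [Real.dist_eq, sub_zero] at this
      linarith
    exact norm_deriv_term_le α ζ c k hk hc R y hR hyR n
  · exact summable_gen α ζ hα c k hk hc x

lemma Acoef_rec (α ζ : ℝ) (hα : 0 < α) (n : ℕ) :
    α * Acoef α ζ (n + 1) * ((4 * (n:ℝ) + 4) * (4 * n + 3) * (4 * n + 2)) =
      (ζ + 4 * n) * Acoef α ζ n := by
  have hD : ((1 / 2 + (n:ℝ)) * (3 / 4 + n) * (n + 1) * (16 * α)) ≠ 0 := by positivity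
  apply mul_right_cancel₀ hD
  have h := Acoef_mul α ζ hα n
  calc α * Acoef α ζ (n + 1) * ((4 * (n:ℝ) + 4) * (4 * n + 3) * (4 * n + 2)) *
        ((1 / 2 + (n:ℝ)) * (3 / 4 + n) * (n + 1) * (16 * α))
      = Acoef α ζ (n+1) * ((1 / 2 + (n:ℝ)) * (3 / 4 + n) * (n + 1) * (16 * α)) *
        (α * ((4 * (n:ℝ) + 4) * (4 * n + 3) * (4 * n + 2))) := by ring
    _ = Acoef α ζ n * (ζ / 4 + n) * (α * ((4 * (n:ℝ) + 4) * (4 * n + 3) * (4 * n + 2))) := by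
        rw [h]
    _ = (ζ + 4 * n) * Acoef α ζ n * ((1 / 2 + (n:ℝ)) * (3 / 4 + n) * (n + 1) * (16 * α)) := by
        ring


/-- The generalized hypergeometric function `₁F₂(a; b₁, b₂; z)`. -/
noncomputable def oneF2 (a b₁ b₂ z : ℝ) : ℝ :=
  ∑' n : ℕ, poch a n * z ^ n / (poch b₁ n * poch b₂ n * (n.factorial : ℝ))

theorem stmt7 (α ζ : ℝ) (hα : 0 < α) (f₁ : ℝ → ℝ)
    (hf₁ : ∀ v : ℝ, f₁ v = oneF2 (ζ / 4) (1 / 2) (3 / 4) (v ^ 4 / (16 * α))) :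
    ∀ v : ℝ,
      α * deriv (deriv (deriv f₁)) v - v ^ 2 * deriv f₁ v - ζ * v * f₁ v = 0 := by
  intro v
  -- basic bounds on coefficients
  have hXn : ∀ n : ℕ, (1:ℝ) ≤ 4*(n:ℝ)+1 := fun n => by
    have : (0:ℝ) ≤ (n:ℝ) := Nat.cast_nonneg n
    linarith
  have hnb : ∀ (n m : ℕ), m ≤ 4*n+1 → ((m:ℝ)) ≤ 4*(n:ℝ)+1 := fun n m h => by
    have : ((m:ℕ):ℝ) ≤ ((4*n+1:ℕ):ℝ) := Nat.cast_le.2 h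
    push_cast at this; linarith
  have hprod3 : ∀ (n : ℕ) (a b c : ℝ), 0 ≤ a → 0 ≤ b → 0 ≤ c →
      a ≤ 4*(n:ℝ)+1 → b ≤ 4*(n:ℝ)+1 → c ≤ 4*(n:ℝ)+1 →
      |Acoef α ζ n| * (a*(b*c)) ≤ |Acoef α ζ n| * (4*(n:ℝ)+1)^3 := by
    intro n a b c ha0 hb0 hc0 ha hb hc
    apply mul_le_mul_of_nonneg_left _ (abs_nonneg _)
    have hX0 : (0:ℝ) ≤ 4*(n:ℝ)+1 := le_trans zero_le_one (hXn n)
    calc a*(b*c) ≤ (4*(n:ℝ)+1) * ((4*(n:ℝ)+1)*(4*(n:ℝ)+1)) := by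
          apply mul_le_mul ha (mul_le_mul hb hc hc0 hX0) (mul_nonneg hb0 hc0) hX0
      _ = (4*(n:ℝ)+1)^3 := by ring
  have hc0 : ∀ n : ℕ, |Acoef α ζ n| ≤ |Acoef α ζ n| * (4*(n:ℝ)+1)^3 := fun n => by
    calc |Acoef α ζ n| = |Acoef α ζ n| * (1*(1*1)) := by ring
      _ ≤ |Acoef α ζ n| * (4*(n:ℝ)+1)^3 :=
        hprod3 n 1 1 1 zero_le_one zero_le_one zero_le_one (hXn n) (hXn n) (hXn n)
  have hc1 : ∀ n : ℕ, |Acoef α ζ n * ((4*n:ℕ):ℝ)| ≤ |Acoef α ζ n| * (4*(n:ℝ)+1)^3 := fun n => by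
    rw [abs_mul, abs_of_nonneg (Nat.cast_nonneg _ : (0:ℝ) ≤ ((4*n:ℕ):ℝ))]
    calc |Acoef α ζ n| * ((4*n:ℕ):ℝ) = |Acoef α ζ n| * (((4*n:ℕ):ℝ)*(1*1)) := by ring
      _ ≤ |Acoef α ζ n| * (4*(n:ℝ)+1)^3 :=
        hprod3 n _ 1 1 (Nat.cast_nonneg _) zero_le_one zero_le_one
          (hnb n _ (by omega)) (hXn n) (hXn n)
  have hc2 : ∀ n : ℕ, |Acoef α ζ n * ((4*n:ℕ):ℝ) * ((4*n-1:ℕ):ℝ)|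
      ≤ |Acoef α ζ n| * (4*(n:ℝ)+1)^3 := fun n => by
    rw [abs_mul, abs_mul, abs_of_nonneg (Nat.cast_nonneg _ : (0:ℝ) ≤ ((4*n:ℕ):ℝ)),
      abs_of_nonneg (Nat.cast_nonneg _ : (0:ℝ) ≤ ((4*n-1:ℕ):ℝ))]
    calc |Acoef α ζ n| * ((4*n:ℕ):ℝ) * ((4*n-1:ℕ):ℝ)
        = |Acoef α ζ n| * (((4*n:ℕ):ℝ)*(((4*n-1:ℕ):ℝ)*1)) := by ring
      _ ≤ |Acoef α ζ n| * (4*(n:ℝ)+1)^3 :=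
        hprod3 n _ _ 1 (Nat.cast_nonneg _) (Nat.cast_nonneg _) zero_le_one
          (hnb n _ (by omega)) (hnb n _ (by omega)) (hXn n)
  have hc3 : ∀ n : ℕ, |Acoef α ζ n * ((4*n:ℕ):ℝ) * ((4*n-1:ℕ):ℝ) * ((4*n-2:ℕ):ℝ)|
      ≤ |Acoef α ζ n| * (4*(n:ℝ)+1)^3 := fun n => by
    rw [abs_mul, abs_mul, abs_mul, abs_of_nonneg (Nat.cast_nonneg _ : (0:ℝ) ≤ ((4*n:ℕ):ℝ)),
      abs_of_nonneg (Nat.cast_nonneg _ : (0:ℝ) ≤ ((4*n-1:ℕ):ℝ)),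
      abs_of_nonneg (Nat.cast_nonneg _ : (0:ℝ) ≤ ((4*n-2:ℕ):ℝ))]
    calc |Acoef α ζ n| * ((4*n:ℕ):ℝ) * ((4*n-1:ℕ):ℝ) * ((4*n-2:ℕ):ℝ)
        = |Acoef α ζ n| * (((4*n:ℕ):ℝ)*(((4*n-1:ℕ):ℝ)*((4*n-2:ℕ):ℝ))) := by ring
      _ ≤ |Acoef α ζ n| * (4*(n:ℝ)+1)^3 :=
        hprod3 n _ _ _ (Nat.cast_nonneg _) (Nat.cast_nonneg _) (Nat.cast_nonneg _)
          (hnb n _ (by omega)) (hnb n _ (by omega)) (hnb n _ (by omega))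
  have hk1 : ∀ n : ℕ, 4*n-1 ≤ 4*n := fun n => Nat.sub_le _ _
  have hk2 : ∀ n : ℕ, 4*n-2 ≤ 4*n := fun n => Nat.sub_le _ _
  have hk3 : ∀ n : ℕ, 4*n-3 ≤ 4*n := fun n => Nat.sub_le _ _
  -- f₁ as a power series
  have hf : f₁ = fun y => ∑' n : ℕ, Acoef α ζ n * y ^ (4*n) := by
    funext y
    rw [hf₁]
    unfold oneF2
    apply tsum_congr; intro n
    have h1 := poch_pos (by norm_num : (0:ℝ) < 1/2) n
    have h2 := poch_pos (by norm_num : (0:ℝ) < 3/4) n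
    have h3 : (0:ℝ) < n.factorial := by exact_mod_cast n.factorial_pos
    have h4 : (0:ℝ) < (16 * α) ^ n := by positivity
    have hz : (y^4/(16*α))^n = y^(4*n) / (16*α)^n := by
      rw [div_pow, ← pow_mul]
    rw [hz]
    unfold Acoef
    set P0 := poch (ζ/4) n with hP0
    set P1 := poch (1/2) n with hP1
    set P2 := poch (3/4) n with hP2
    have hne1 : P1 ≠ 0 := ne_of_gt h1
    have hne2 : P2 ≠ 0 := ne_of_gt h2
    have hne3 : ((n.factorial : ℕ) : ℝ) ≠ 0 := ne_of_gt h3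
    have hne4 : ((16:ℝ) * α) ^ n ≠ 0 := ne_of_gt h4
    field_simp
  -- first derivative
  have hd0 : ∀ x : ℝ, HasDerivAt f₁
      (∑' n : ℕ, Acoef α ζ n * ((4*n:ℕ):ℝ) * x ^ (4*n-1)) x := by
    intro x
    rw [hf]
    exact hasDerivAt_tsum_gen α ζ hα (fun n => Acoef α ζ n) (fun n => 4*n)
      (fun n => le_refl _) hc0 x
  have hD1 : deriv f₁ = fun x => ∑' n : ℕ, Acoef α ζ n * ((4*n:ℕ):ℝ) * x ^ (4*n-1) :=
    funext fun x => (hd0 x).deriv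
  -- second derivative
  have hd1 : ∀ x : ℝ, HasDerivAt (fun y => ∑' n : ℕ, Acoef α ζ n * ((4*n:ℕ):ℝ) * y ^ (4*n-1))
      (∑' n : ℕ, Acoef α ζ n * ((4*n:ℕ):ℝ) * ((4*n-1:ℕ):ℝ) * x ^ (4*n-2)) x := by
    intro x
    have h := hasDerivAt_tsum_gen α ζ hα (fun n => Acoef α ζ n * ((4*n:ℕ):ℝ))
      (fun n => 4*n-1) hk1 hc1 x
    have he : ∀ n : ℕ, 4*n-1-1 = 4*n-2 := fun n => by omega
    simp_rw [he] at h
    exact h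
  have hD2 : deriv (deriv f₁)
      = fun x => ∑' n : ℕ, Acoef α ζ n * ((4*n:ℕ):ℝ) * ((4*n-1:ℕ):ℝ) * x ^ (4*n-2) := by
    funext x; rw [hD1]; exact (hd1 x).deriv
  -- third derivative
  have hd2 : ∀ x : ℝ, HasDerivAt
      (fun y => ∑' n : ℕ, Acoef α ζ n * ((4*n:ℕ):ℝ) * ((4*n-1:ℕ):ℝ) * y ^ (4*n-2))
      (∑' n : ℕ, Acoef α ζ n * ((4*n:ℕ):ℝ) * ((4*n-1:ℕ):ℝ) * ((4*n-2:ℕ):ℝ) * x ^ (4*n-3)) x := by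
    intro x
    have h := hasDerivAt_tsum_gen α ζ hα
      (fun n => Acoef α ζ n * ((4*n:ℕ):ℝ) * ((4*n-1:ℕ):ℝ)) (fun n => 4*n-2) hk2 hc2 x
    have he : ∀ n : ℕ, 4*n-2-1 = 4*n-3 := fun n => by omega
    simp_rw [he] at h
    exact h
  have hD3v : deriv (deriv (deriv f₁)) v
      = ∑' n : ℕ, Acoef α ζ n * ((4*n:ℕ):ℝ) * ((4*n-1:ℕ):ℝ) * ((4*n-2:ℕ):ℝ) * v ^ (4*n-3) := by
    rw [hD2]; exact (hd2 v).deriv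
  -- summabilities at v
  have hs0 : Summable (fun n : ℕ => Acoef α ζ n * v ^ (4*n)) :=
    summable_gen α ζ hα (fun n => Acoef α ζ n) (fun n => 4*n) (fun n => le_refl _) hc0 v
  have hs1 : Summable (fun n : ℕ => Acoef α ζ n * ((4*n:ℕ):ℝ) * v ^ (4*n-1)) :=
    summable_gen α ζ hα (fun n => Acoef α ζ n * ((4*n:ℕ):ℝ)) (fun n => 4*n-1) hk1 hc1 v
  have hs3 : Summable (fun n : ℕ =>
      Acoef α ζ n * ((4*n:ℕ):ℝ) * ((4*n-1:ℕ):ℝ) * ((4*n-2:ℕ):ℝ) * v ^ (4*n-3)) :=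
    summable_gen α ζ hα
      (fun n => Acoef α ζ n * ((4*n:ℕ):ℝ) * ((4*n-1:ℕ):ℝ) * ((4*n-2:ℕ):ℝ))
      (fun n => 4*n-3) hk3 hc3 v
  -- the telescoping sequence
  set b : ℕ → ℝ := fun n =>
    α * (Acoef α ζ n * ((4*n:ℕ):ℝ) * ((4*n-1:ℕ):ℝ) * ((4*n-2:ℕ):ℝ) * v ^ (4*n-3))
    with hbdef
  have hb : Summable b := hs3.mul_left α
  have hb0 : b 0 = 0 := by simp [hbdef]
  have hbsucc : ∀ n : ℕ, b (n+1) = (ζ + 4*(n:ℝ)) * Acoef α ζ n * v ^ (4*n+1) := by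
    intro n
    have e : b (n+1) = α * (Acoef α ζ (n+1) * ((4*n+4:ℕ):ℝ) * ((4*n+3:ℕ):ℝ) * ((4*n+2:ℕ):ℝ)
        * v ^ (4*n+1)) := by
      simp only [hbdef]
      rw [show 4*(n+1)-3 = 4*n+1 from by omega, show 4*(n+1)-2 = 4*n+2 from by omega,
        show 4*(n+1)-1 = 4*n+3 from by omega, show 4*(n+1) = 4*n+4 from by ring]
    rw [e]
    have hrec := Acoef_rec α ζ hα n
    push_cast
    calc α * (Acoef α ζ (n+1) * (4*(n:ℝ)+4) * (4*(n:ℝ)+3) * (4*(n:ℝ)+2) * v ^ (4*n+1))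
        = (α * Acoef α ζ (n+1) * ((4*(n:ℝ)+4) * (4*(n:ℝ)+3) * (4*(n:ℝ)+2))) * v ^ (4*n+1) := by
          ring
      _ = ((ζ + 4*(n:ℝ)) * Acoef α ζ n) * v ^ (4*n+1) := by rw [hrec]
      _ = (ζ + 4*(n:ℝ)) * Acoef α ζ n * v ^ (4*n+1) := by ring
  have hstep : ∀ n : ℕ,
      α * (Acoef α ζ n * ((4*n:ℕ):ℝ) * ((4*n-1:ℕ):ℝ) * ((4*n-2:ℕ):ℝ) * v ^ (4*n-3))
        - v^2 * (Acoef α ζ n * ((4*n:ℕ):ℝ) * v ^ (4*n-1))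
        - ζ*v * (Acoef α ζ n * v ^ (4*n)) = b n - b (n+1) := by
    intro n
    rw [hbsucc n]
    cases n with
    | zero => simp [hbdef]; ring
    | succ m =>
      have e : b (m+1) = α * (Acoef α ζ (m+1) * ((4*m+4:ℕ):ℝ) * ((4*m+3:ℕ):ℝ) * ((4*m+2:ℕ):ℝ)
          * v ^ (4*m+1)) := by
        simp only [hbdef]
        rw [show 4*(m+1)-3 = 4*m+1 from by omega, show 4*(m+1)-2 = 4*m+2 from by omega,
          show 4*(m+1)-1 = 4*m+3 from by omega, show 4*(m+1) = 4*m+4 from by ring]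
      rw [e]
      rw [show 4*(m+1)-3 = 4*m+1 from by omega, show 4*(m+1)-2 = 4*m+2 from by omega,
        show 4*(m+1)-1 = 4*m+3 from by omega, show 4*(m+1) = 4*m+4 from by ring]
      push_cast
      ring
  -- the combined series sums to zero
  have hsummable : Summable (fun n : ℕ =>
      α * (Acoef α ζ n * ((4*n:ℕ):ℝ) * ((4*n-1:ℕ):ℝ) * ((4*n-2:ℕ):ℝ) * v ^ (4*n-3))
        - v^2 * (Acoef α ζ n * ((4*n:ℕ):ℝ) * v ^ (4*n-1))
        - ζ*v * (Acoef α ζ n * v ^ (4*n))) :=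
    ((hs3.mul_left α).sub (hs1.mul_left (v^2))).sub (hs0.mul_left (ζ*v))
  have hzero : HasSum (fun n : ℕ =>
      α * (Acoef α ζ n * ((4*n:ℕ):ℝ) * ((4*n-1:ℕ):ℝ) * ((4*n-2:ℕ):ℝ) * v ^ (4*n-3))
        - v^2 * (Acoef α ζ n * ((4*n:ℕ):ℝ) * v ^ (4*n-1))
        - ζ*v * (Acoef α ζ n * v ^ (4*n))) 0 := by
    rw [hsummable.hasSum_iff_tendsto_nat]
    have hps : ∀ N : ℕ, ∑ i ∈ Finset.range N,
        (α * (Acoef α ζ i * ((4*i:ℕ):ℝ) * ((4*i-1:ℕ):ℝ) * ((4*i-2:ℕ):ℝ) * v ^ (4*i-3))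
          - v^2 * (Acoef α ζ i * ((4*i:ℕ):ℝ) * v ^ (4*i-1))
          - ζ*v * (Acoef α ζ i * v ^ (4*i))) = - b N := by
      intro N
      rw [Finset.sum_congr rfl (fun i _ => hstep i), Finset.sum_range_sub' b N, hb0]
      ring
    simp_rw [hps]
    simpa using hb.tendsto_atTop_zero.neg
  -- conclusion
  have hfv : f₁ v = ∑' n : ℕ, Acoef α ζ n * v ^ (4*n) := by rw [hf]
  have hD1v : deriv f₁ v = ∑' n : ℕ, Acoef α ζ n * ((4*n:ℕ):ℝ) * v ^ (4*n-1) := by rw [hD1]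
  rw [hD3v, hD1v, hfv, ← tsum_mul_left, ← tsum_mul_left, ← tsum_mul_left,
    ← Summable.tsum_sub (hs3.mul_left α) (hs1.mul_left (v^2)),
    ← Summable.tsum_sub ((hs3.mul_left α).sub (hs1.mul_left (v^2))) (hs0.mul_left (ζ*v))]
  exact hzero.tsum_eq
end

section
/- Define P(v) = ∫₀^∞ κ^{(ζ−1)/2}·[e^{-vκ} − cos(vκ) − sin(vκ)]·K_{(ζ−1)/4}(κ²) dκ for real v and ζ > 1, where K denotes the modified Bessel function of the second kind. Then for v < 0, the integral ∫₀^∞ κ^{(ζ−1)/2} e^{|v|κ} K_{(ζ−1)/4}(κ²) dκ (the dominant term of P(v)) converges, and P(v) → +∞ as v → −∞; more precisely, P(v) ≥ C·e^{v²/8} for all sufficiently negative v and some constant C > 0. -/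
open Real MeasureTheory Filter

/-- The Macdonald function (modified Bessel function of the second kind), via its
standard integral representation `K_ν(x) = ∫₀^∞ e^{-x cosh t} cosh(νt) dt`. -/
noncomputable def besselK (ν x : ℝ) : ℝ :=
  ∫ t in Set.Ioi (0:ℝ), Real.exp (-x * Real.cosh t) * Real.cosh (ν * t)

lemma exp_image_Ioi : Real.exp '' Set.Ioi (0:ℝ) = Set.Ioi 1 := by
  ext u
  constructor
  · rintro ⟨t, ht, rfl⟩
    simpa using Real.one_lt_exp_iff.mpr ht
  · intro hu
    exact ⟨Real.log u, Real.log_pos hu, Real.exp_log (lt_trans one_pos hu)⟩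

lemma gIntOn {ν b : ℝ} (hν : 0 < ν) (hb : 0 < b) :
    IntegrableOn (fun u : ℝ => u ^ (ν - 1) * Real.exp (-(b * u))) (Set.Ioi 0) := by
  have := integrableOn_rpow_mul_exp_neg_mul_rpow (s := ν - 1) (p := 1) (b := b)
    (by linarith) one_pos hb
  simpa [Real.rpow_one, neg_mul] using this

lemma besselK_nonneg (ν x : ℝ) : 0 ≤ besselK ν x := by
  apply MeasureTheory.setIntegral_nonneg measurableSet_Ioi
  intro t _
  positivity

lemma besselK_meas (ν : ℝ) : Measurable (besselK ν) := by
  have : StronglyMeasurable (besselK ν) := by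
    apply MeasureTheory.StronglyMeasurable.integral_prod_right'
      (f := fun p : ℝ × ℝ => Real.exp (-p.1 * Real.cosh p.2) * Real.cosh (ν * p.2))
    exact (Continuous.stronglyMeasurable (by continuity))
  exact this.measurable

/-- Change of variables `u = exp t`. -/
lemma cov_exp (g : ℝ → ℝ) :
    (∫ u in Set.Ioi (1:ℝ), g u) = ∫ t in Set.Ioi (0:ℝ), Real.exp t * g (Real.exp t) := by
  rw [← exp_image_Ioi]
  rw [integral_image_eq_integral_abs_deriv_smul measurableSet_Ioi
    (fun x _ => (Real.hasDerivAt_exp x).hasDerivWithinAt) (Real.exp_injective.injOn) g]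
  simp [abs_of_pos (Real.exp_pos _), smul_eq_mul]

lemma cov_exp_int {g : ℝ → ℝ} (hg : IntegrableOn g (Set.Ioi 1)) :
    IntegrableOn (fun t => Real.exp t * g (Real.exp t)) (Set.Ioi (0:ℝ)) := by
  have := (integrableOn_image_iff_integrableOn_abs_deriv_smul (s := Set.Ioi (0:ℝ))
    (f := Real.exp) (f' := Real.exp) measurableSet_Ioi
    (fun x _ => (Real.hasDerivAt_exp x).hasDerivWithinAt) (Real.exp_injective.injOn) g).mp
  rw [exp_image_Ioi] at this
  simpa [abs_of_pos (Real.exp_pos _), smul_eq_mul] using this hg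

/-- dominating function for the Bessel integrand -/
noncomputable def gdom (ν x t : ℝ) : ℝ :=
  Real.exp (-(x/2)) * (Real.exp t * (Real.exp t ^ (ν - 1) * Real.exp (-(x/4 * Real.exp t))))

lemma gdom_int {ν x : ℝ} (hν : 0 < ν) (hx : 0 < x) :
    IntegrableOn (gdom ν x) (Set.Ioi (0:ℝ)) := by
  unfold gdom
  have h := cov_exp_int (g := fun u => u ^ (ν - 1) * Real.exp (-(x/4 * u)))
    ((gIntOn hν (by positivity : (0:ℝ) < x/4)).mono_set
      (fun u (hu : 1 < u) => lt_trans one_pos hu))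
  exact h.const_mul _

lemma gdom_integral_le {ν x : ℝ} (hν : 0 < ν) (hx : 0 < x) :
    (∫ t in Set.Ioi (0:ℝ), gdom ν x t) ≤ Real.exp (-(x/2)) * ((4/x) ^ ν * Real.Gamma ν) := by
  unfold gdom
  rw [MeasureTheory.integral_const_mul]
  have h4 : (0:ℝ) < x/4 := by positivity
  have hcov : (∫ t in Set.Ioi (0:ℝ),
        Real.exp t * (Real.exp t ^ (ν - 1) * Real.exp (-(x/4 * Real.exp t))))
      = ∫ u in Set.Ioi (1:ℝ), u ^ (ν - 1) * Real.exp (-(x/4 * u)) :=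
    (cov_exp (fun u => u ^ (ν - 1) * Real.exp (-(x/4 * u)))).symm
  rw [hcov]
  have hmono : (∫ u in Set.Ioi (1:ℝ), u ^ (ν - 1) * Real.exp (-(x/4 * u)))
      ≤ ∫ u in Set.Ioi (0:ℝ), u ^ (ν - 1) * Real.exp (-(x/4 * u)) := by
    apply MeasureTheory.setIntegral_mono_set (gIntOn hν h4)
    · filter_upwards [self_mem_ae_restrict measurableSet_Ioi] with u hu
      have : (0:ℝ) < u := hu
      positivity
    · exact HasSubset.Subset.eventuallyLE (fun u (hu : 1 < u) => lt_trans one_pos hu)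
  have hval : (∫ u in Set.Ioi (0:ℝ), u ^ (ν - 1) * Real.exp (-(x/4 * u)))
      = (1/(x/4)) ^ ν * Real.Gamma ν := integral_rpow_mul_exp_neg_mul_Ioi hν h4
  rw [hval] at hmono
  have : (1/(x/4)) ^ ν = (4/x) ^ ν := by norm_num
  rw [this] at hmono
  exact mul_le_mul_of_nonneg_left hmono (Real.exp_nonneg _)

lemma pointwise_dom {ν x : ℝ} (hν : 0 < ν) (hx : 0 < x) {t : ℝ} (ht : 0 < t) :
    Real.exp (-x * Real.cosh t) * Real.cosh (ν * t) ≤ gdom ν x t := by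
  have hch : Real.cosh (ν * t) ≤ Real.exp (ν * t) := by
    rw [Real.cosh_eq]
    have h := Real.exp_le_exp.mpr (by nlinarith : -(ν * t) ≤ ν * t)
    linarith
  have hexp_rpow : Real.exp (ν * t) = Real.exp t * Real.exp t ^ (ν - 1) := by
    rw [Real.rpow_def_of_pos (Real.exp_pos t), Real.log_exp, ← Real.exp_add]
    congr 1; ring
  have hcosh1 : 1 ≤ Real.cosh t := Real.one_le_cosh t
  have hcosh2 : Real.exp t / 2 ≤ Real.cosh t := by
    rw [Real.cosh_eq]; linarith [Real.exp_pos (-t)]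
  have hkey : Real.exp (-x * Real.cosh t) ≤ Real.exp (-(x/2)) * Real.exp (-(x/4 * Real.exp t)) := by
    rw [← Real.exp_add]
    apply Real.exp_le_exp.mpr
    nlinarith
  calc Real.exp (-x * Real.cosh t) * Real.cosh (ν * t)
      ≤ (Real.exp (-(x/2)) * Real.exp (-(x/4 * Real.exp t))) * Real.exp (ν * t) :=
        mul_le_mul hkey hch (by positivity) (by positivity)
    _ = gdom ν x t := by rw [hexp_rpow]; unfold gdom; ring

lemma besselK_integrand_int {ν x : ℝ} (hν : 0 < ν) (hx : 0 < x) :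
    IntegrableOn (fun t => Real.exp (-x * Real.cosh t) * Real.cosh (ν * t)) (Set.Ioi (0:ℝ)) := by
  apply Integrable.mono' (gdom_int hν hx)
  · exact (Continuous.aestronglyMeasurable (by continuity))
  · filter_upwards [self_mem_ae_restrict measurableSet_Ioi] with t ht
    rw [Real.norm_eq_abs, abs_of_nonneg (by positivity)]
    exact pointwise_dom hν hx ht

lemma besselK_le {ν x : ℝ} (hν : 0 < ν) (hx : 0 < x) :
    besselK ν x ≤ Real.exp (-(x/2)) * ((4/x) ^ ν * Real.Gamma ν) := by
  refine le_trans ?_ (gdom_integral_le hν hx)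
  apply MeasureTheory.setIntegral_mono_on (besselK_integrand_int hν hx) (gdom_int hν hx)
    measurableSet_Ioi
  exact fun t ht => pointwise_dom hν hx ht

lemma besselK_ge {ν x : ℝ} (hν : 0 < ν) (hx : 0 < x) :
    Real.exp (-(x * Real.cosh 1)) ≤ besselK ν x := by
  have hsub : Set.Ioc (0:ℝ) 1 ⊆ Set.Ioi 0 := Set.Ioc_subset_Ioi_self
  have hint := besselK_integrand_int hν hx
  have h1 : (∫ t in Set.Ioc (0:ℝ) 1, Real.exp (-x * Real.cosh t) * Real.cosh (ν * t))
      ≤ besselK ν x := by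
    apply MeasureTheory.setIntegral_mono_set hint
    · filter_upwards [self_mem_ae_restrict measurableSet_Ioi] with t _
      positivity
    · exact HasSubset.Subset.eventuallyLE hsub
  refine le_trans ?_ h1
  have h2 : (∫ _t in Set.Ioc (0:ℝ) 1, Real.exp (-(x * Real.cosh 1)))
      ≤ ∫ t in Set.Ioc (0:ℝ) 1, Real.exp (-x * Real.cosh t) * Real.cosh (ν * t) := by
    apply MeasureTheory.setIntegral_mono_on
    · exact integrableOn_const measure_Ioc_lt_top.ne
    · exact hint.mono_set hsub
    · exact measurableSet_Ioc
    · intro t ht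
      have hc : Real.cosh t ≤ Real.cosh 1 := by
        rw [Real.cosh_le_cosh, abs_of_pos ht.1, abs_one]; exact ht.2
      have h3 : Real.exp (-(x * Real.cosh 1)) ≤ Real.exp (-x * Real.cosh t) := by
        apply Real.exp_le_exp.mpr; nlinarith
      calc Real.exp (-(x * Real.cosh 1)) = Real.exp (-(x * Real.cosh 1)) * 1 := by ring
        _ ≤ Real.exp (-x * Real.cosh t) * Real.cosh (ν * t) :=
            mul_le_mul h3 (Real.one_le_cosh _) one_pos.le (Real.exp_nonneg _)
  refine le_trans ?_ h2
  rw [MeasureTheory.setIntegral_const, Real.volume_real_Ioc, smul_eq_mul]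
  norm_num

lemma expquad_int (b : ℝ) : Integrable (fun κ : ℝ => Real.exp (b * κ - κ ^ 2 / 2)) := by
  have hi : Integrable (fun κ : ℝ => Real.exp (-(1/2 : ℝ) * (κ - b) ^ 2)) :=
    (integrable_exp_neg_mul_sq (by norm_num : (0:ℝ) < 1/2)).comp_sub_right b
  have heq : (fun κ : ℝ => Real.exp (b * κ - κ ^ 2 / 2))
      = fun κ : ℝ => Real.exp (b ^ 2 / 2) * Real.exp (-(1/2 : ℝ) * (κ - b) ^ 2) := by
    funext κ; rw [← Real.exp_add]; congr 1; ring
  rw [heq]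
  exact hi.const_mul _

lemma rpow_sq_eq {κ : ℝ} (hκ : 0 < κ) (ν : ℝ) : ((κ ^ 2 : ℝ)) ^ ν = κ ^ (2 * ν) := by
  rw [← Real.rpow_natCast κ 2, ← Real.rpow_mul hκ.le]
  norm_num

lemma kappa_bound {ν b : ℝ} (hν : 0 < ν) {κ : ℝ} (hκ : 0 < κ) :
    κ ^ (2*ν) * Real.exp (b * κ) * besselK ν (κ ^ 2)
      ≤ (4 ^ ν * Real.Gamma ν) * Real.exp (b * κ - κ ^ 2 / 2) := by
  have hk2 : (0:ℝ) < κ ^ 2 := by positivity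
  have hK := besselK_le hν hk2
  have hdiv : ((4:ℝ) / κ ^ 2) ^ ν = 4 ^ ν / κ ^ (2*ν) := by
    rw [Real.div_rpow (by norm_num) hk2.le, rpow_sq_eq hκ]
  rw [hdiv] at hK
  have h1 : κ ^ (2*ν) * Real.exp (b * κ) * besselK ν (κ ^ 2)
      ≤ κ ^ (2*ν) * Real.exp (b * κ)
          * (Real.exp (-(κ ^ 2 / 2)) * (4 ^ ν / κ ^ (2*ν) * Real.Gamma ν)) :=
    mul_le_mul_of_nonneg_left hK (by positivity)
  refine h1.trans (le_of_eq ?_)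
  have hne : κ ^ (2*ν) ≠ 0 := (Real.rpow_pos_of_pos hκ _).ne'
  rw [show b * κ - κ ^ 2 / 2 = b * κ + -(κ ^ 2 / 2) by ring, Real.exp_add]
  field_simp

lemma main_int {ν : ℝ} (hν : 0 < ν) (b : ℝ) :
    IntegrableOn (fun κ => κ ^ (2*ν) * Real.exp (b * κ) * besselK ν (κ ^ 2))
      (Set.Ioi (0:ℝ)) := by
  apply Integrable.mono' (((expquad_int b).const_mul (4 ^ ν * Real.Gamma ν)).restrict)
  · have m1 : AEStronglyMeasurable (fun κ : ℝ => κ ^ (2*ν))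
        (volume.restrict (Set.Ioi (0:ℝ))) := by
      apply ContinuousOn.aestronglyMeasurable _ measurableSet_Ioi
      exact fun x hx =>
        (Real.continuousAt_rpow_const x _ (Or.inl (ne_of_gt hx))).continuousWithinAt
    have m2 : AEStronglyMeasurable (fun κ : ℝ => Real.exp (b * κ))
        (volume.restrict (Set.Ioi (0:ℝ))) :=
      (Continuous.aestronglyMeasurable (by continuity))
    have m3 : AEStronglyMeasurable (fun κ : ℝ => besselK ν (κ ^ 2))
        (volume.restrict (Set.Ioi (0:ℝ))) :=
      ((besselK_meas ν).comp (measurable_id.pow_const 2)).aestronglyMeasurable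
    exact (m1.mul m2).mul m3
  · filter_upwards [self_mem_ae_restrict measurableSet_Ioi] with κ hκ
    have hκ0 : (0:ℝ) < κ := hκ
    rw [Real.norm_eq_abs, abs_of_nonneg (mul_nonneg (by positivity) (besselK_nonneg ν (κ^2)))]
    exact kappa_bound hν hκ0

lemma cosh_one_lt : Real.cosh 1 < 1.6 := by
  have h1 : Real.exp 1 < 2.7182818286 := Real.exp_one_lt_d9
  have h2 : Real.exp (-1) < 0.368 := by
    rw [Real.exp_neg]
    have hp : (0:ℝ) < Real.exp 1 := Real.exp_pos 1
    have hinv : Real.exp 1 * (Real.exp 1)⁻¹ = 1 := mul_inv_cancel₀ hp.ne'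
    nlinarith [Real.exp_one_gt_d9, inv_pos.mpr hp]
  rw [Real.cosh_eq]
  linarith

set_option maxHeartbeats 1000000 in
lemma P_lower {ν : ℝ} (hν : 0 < ν) {M : ℝ}
    (hM : M = ∫ κ in Set.Ioi (0:ℝ), κ ^ (2*ν) * besselK ν (κ ^ 2))
    {v : ℝ} (hv : v ≤ -(64 + 8 * Real.log (2*M + 2))) :
    Real.exp (v ^ 2 / 8) + 1 ≤ ∫ κ in Set.Ioi (0:ℝ),
      κ ^ (2*ν) * (Real.exp (-v * κ) - Real.cos (v * κ) - Real.sin (v * κ))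
        * besselK ν (κ ^ 2) := by
  have hint0 : IntegrableOn (fun κ => κ ^ (2*ν) * besselK ν (κ ^ 2)) (Set.Ioi (0:ℝ)) := by
    have := main_int hν 0
    simpa using this
  have hM0 : 0 ≤ M := by
    rw [hM]
    exact MeasureTheory.setIntegral_nonneg measurableSet_Ioi fun κ hκ =>
      mul_nonneg (Real.rpow_nonneg (le_of_lt hκ) _) (besselK_nonneg _ _)
  set L := Real.log (2*M + 2) with hLdef
  have hL : 0 ≤ L := Real.log_nonneg (by linarith)
  have hv64 : 64 + 8*L ≤ -v := by linarith
  have hwpos : (0:ℝ) < -v := by linarith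
  set f₁ : ℝ → ℝ := fun κ => κ ^ (2*ν) * Real.exp (-v * κ) * besselK ν (κ ^ 2) with hf1def
  set f₂ : ℝ → ℝ := fun κ =>
    κ ^ (2*ν) * ((Real.cos (v * κ) + Real.sin (v * κ)) * besselK ν (κ ^ 2)) with hf2def
  have hf1 : IntegrableOn f₁ (Set.Ioi (0:ℝ)) := main_int hν (-v)
  have hf2 : IntegrableOn f₂ (Set.Ioi (0:ℝ)) := by
    apply Integrable.mono' (hint0.const_mul 2)
    · have m1 : AEStronglyMeasurable (fun κ : ℝ => κ ^ (2*ν))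
          (volume.restrict (Set.Ioi (0:ℝ))) := by
        apply ContinuousOn.aestronglyMeasurable _ measurableSet_Ioi
        exact fun x hx =>
          (Real.continuousAt_rpow_const x _ (Or.inl (ne_of_gt hx))).continuousWithinAt
      have m2 : AEStronglyMeasurable (fun κ : ℝ => Real.cos (v * κ) + Real.sin (v * κ))
          (volume.restrict (Set.Ioi (0:ℝ))) :=
        (Continuous.aestronglyMeasurable (by continuity))
      have m3 : AEStronglyMeasurable (fun κ : ℝ => besselK ν (κ ^ 2))
          (volume.restrict (Set.Ioi (0:ℝ))) :=
        ((besselK_meas ν).comp (measurable_id.pow_const 2)).aestronglyMeasurable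
      exact m1.mul (m2.mul m3)
    · filter_upwards [self_mem_ae_restrict measurableSet_Ioi] with κ hκ
      have hκ0 : (0:ℝ) < κ := hκ
      have hKnn := besselK_nonneg ν (κ ^ 2)
      have htrig : |Real.cos (v * κ) + Real.sin (v * κ)| ≤ 2 := by
        calc |Real.cos (v * κ) + Real.sin (v * κ)|
            ≤ |Real.cos (v * κ)| + |Real.sin (v * κ)| := abs_add_le _ _
          _ ≤ 2 := by
              have := Real.abs_cos_le_one (v * κ)
              have := Real.abs_sin_le_one (v * κ)
              linarith
      rw [hf2def, Real.norm_eq_abs, abs_mul, abs_mul,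
        abs_of_nonneg (Real.rpow_nonneg hκ0.le _), abs_of_nonneg hKnn]
      calc κ ^ (2*ν) * (|Real.cos (v * κ) + Real.sin (v * κ)| * besselK ν (κ ^ 2))
          ≤ κ ^ (2*ν) * (2 * besselK ν (κ ^ 2)) := by
            apply mul_le_mul_of_nonneg_left _ (Real.rpow_nonneg hκ0.le _)
            exact mul_le_mul_of_nonneg_right htrig hKnn
        _ = 2 * (κ ^ (2*ν) * besselK ν (κ ^ 2)) := by ring
  have hsplit : (fun κ => κ ^ (2*ν) *
        (Real.exp (-v * κ) - Real.cos (v * κ) - Real.sin (v * κ)) * besselK ν (κ ^ 2))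
      = fun κ => f₁ κ - f₂ κ := by
    funext κ; rw [hf1def, hf2def]; ring
  rw [hsplit, MeasureTheory.integral_sub hf1 hf2]
  -- bound |∫ f₂| ≤ 2*M
  have hf2bound : |∫ κ in Set.Ioi (0:ℝ), f₂ κ| ≤ 2 * M := by
    calc |∫ κ in Set.Ioi (0:ℝ), f₂ κ| ≤ ∫ κ in Set.Ioi (0:ℝ), |f₂ κ| := by
          simpa [Real.norm_eq_abs] using
            MeasureTheory.norm_integral_le_integral_norm (μ := volume.restrict (Set.Ioi 0)) f₂
      _ ≤ ∫ κ in Set.Ioi (0:ℝ), 2 * (κ ^ (2*ν) * besselK ν (κ ^ 2)) := by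
          apply MeasureTheory.integral_mono_ae hf2.abs (hint0.const_mul 2)
          filter_upwards [self_mem_ae_restrict measurableSet_Ioi] with κ hκ
          have hκ0 : (0:ℝ) < κ := hκ
          have hKnn := besselK_nonneg ν (κ ^ 2)
          have htrig : |Real.cos (v * κ) + Real.sin (v * κ)| ≤ 2 := by
            have := Real.abs_cos_le_one (v * κ)
            have := Real.abs_sin_le_one (v * κ)
            calc |Real.cos (v * κ) + Real.sin (v * κ)|
                ≤ |Real.cos (v * κ)| + |Real.sin (v * κ)| := abs_add_le _ _
              _ ≤ 2 := by linarith
          rw [hf2def, abs_mul, abs_mul,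
            abs_of_nonneg (Real.rpow_nonneg hκ0.le _), abs_of_nonneg hKnn]
          calc κ ^ (2*ν) * (|Real.cos (v * κ) + Real.sin (v * κ)| * besselK ν (κ ^ 2))
              ≤ κ ^ (2*ν) * (2 * besselK ν (κ ^ 2)) := by
                apply mul_le_mul_of_nonneg_left _ (Real.rpow_nonneg hκ0.le _)
                exact mul_le_mul_of_nonneg_right htrig hKnn
            _ = 2 * (κ ^ (2*ν) * besselK ν (κ ^ 2)) := by ring
      _ = 2 * M := by rw [hM, MeasureTheory.integral_const_mul]
  set y : ℝ := -v/4 with hydef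
  have hy16 : 16 ≤ y := by rw [hydef]; linarith
  have hIccSub : Set.Icc y (y+1) ⊆ Set.Ioi (0:ℝ) := fun κ hκ => by
    have := hκ.1; simp only [Set.mem_Ioi]; linarith
  set c : ℝ := Real.cosh 1 with hcdef
  have hc1 : 1 ≤ c := Real.one_le_cosh 1
  have hc16 : c < 1.6 := cosh_one_lt
  set E : ℝ := (-v) * y - (y+1)^2 * c with hEdef
  -- lower bound on ∫ f₁ over Icc
  have hconst : Real.exp E ≤ ∫ κ in Set.Icc y (y+1), f₁ κ := by
    have hpt : ∀ κ ∈ Set.Icc y (y+1), Real.exp E ≤ f₁ κ := by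
      intro κ hκ
      have hκ1 : 1 ≤ κ := by have := hκ.1; linarith
      have hκ0 : (0:ℝ) < κ := by linarith
      have hrp : 1 ≤ κ ^ (2*ν) := by
        have := Real.rpow_le_rpow (le_of_lt one_pos) hκ1 (by positivity : (0:ℝ) ≤ 2*ν)
        rwa [Real.one_rpow] at this
      have hKlow : Real.exp (-(κ ^ 2 * c)) ≤ besselK ν (κ ^ 2) :=
        besselK_ge hν (by positivity)
      have hsq : κ ^ 2 ≤ (y+1)^2 := by nlinarith [hκ.2]
      have h1 : Real.exp E ≤ Real.exp (-v * κ) * Real.exp (-(κ ^ 2 * c)) := by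
        rw [← Real.exp_add]
        apply Real.exp_le_exp.mpr
        rw [hEdef]
        nlinarith [hκ.1, hκ.2]
      have h2 : Real.exp (-v * κ) * Real.exp (-(κ ^ 2 * c))
          ≤ Real.exp (-v * κ) * besselK ν (κ ^ 2) :=
        mul_le_mul_of_nonneg_left hKlow (Real.exp_nonneg _)
      have h3 : Real.exp (-v * κ) * besselK ν (κ ^ 2)
          ≤ κ ^ (2*ν) * (Real.exp (-v * κ) * besselK ν (κ ^ 2)) := by
        nlinarith [mul_nonneg (Real.exp_nonneg (-v*κ)) (besselK_nonneg ν (κ^2))]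
      rw [hf1def]
      calc Real.exp E ≤ Real.exp (-v * κ) * Real.exp (-(κ ^ 2 * c)) := h1
        _ ≤ Real.exp (-v * κ) * besselK ν (κ ^ 2) := h2
        _ ≤ κ ^ (2*ν) * (Real.exp (-v * κ) * besselK ν (κ ^ 2)) := h3
        _ = κ ^ (2*ν) * Real.exp (-v * κ) * besselK ν (κ ^ 2) := by ring
    have := MeasureTheory.setIntegral_mono_on
      (integrableOn_const measure_Icc_lt_top.ne)
      (hf1.mono_set hIccSub) measurableSet_Icc hpt
    rw [MeasureTheory.setIntegral_const, Real.volume_real_Icc] at this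
    simpa using this
  have hIoiGe : (∫ κ in Set.Icc y (y+1), f₁ κ) ≤ ∫ κ in Set.Ioi (0:ℝ), f₁ κ := by
    apply MeasureTheory.setIntegral_mono_set hf1
    · filter_upwards [self_mem_ae_restrict measurableSet_Ioi] with κ hκ
      have hκ0 : (0:ℝ) < κ := hκ
      rw [hf1def]
      exact mul_nonneg (mul_nonneg (Real.rpow_nonneg hκ0.le _) (Real.exp_nonneg _))
        (besselK_nonneg _ _)
    · exact HasSubset.Subset.eventuallyLE hIccSub
  -- arithmetic
  have hE : v ^ 2 / 8 + L ≤ E := by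
    rw [hEdef, hydef]
    have hw : 64 + 8*L ≤ -v := hv64
    nlinarith [mul_le_mul_of_nonneg_left hw (le_of_lt hwpos),
      mul_le_mul_of_nonneg_left (show (64:ℝ) ≤ -v by linarith) hL,
      mul_nonneg (show (0:ℝ) ≤ 1.6 - c by linarith) (sq_nonneg (-v/4 + 1))]
  have hexpE : Real.exp (v ^ 2 / 8) * (2*M + 2) ≤ Real.exp E := by
    have := Real.exp_le_exp.mpr hE
    rwa [Real.exp_add, hLdef, Real.exp_log (by linarith : (0:ℝ) < 2*M + 2)] at this
  have he1 : 1 ≤ Real.exp (v ^ 2 / 8) := Real.one_le_exp (by positivity)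
  have habs := abs_le.mp hf2bound
  nlinarith [hconst, hIoiGe, habs.1, habs.2, hexpE]

set_option maxHeartbeats 1000000 in
theorem stmt18 (ζ : ℝ) (hζ : 1 < ζ) (P : ℝ → ℝ)
    (hP : ∀ v : ℝ, P v = ∫ κ in Set.Ioi (0:ℝ),
      κ ^ ((ζ - 1) / 2) * (Real.exp (-v * κ) - Real.cos (v * κ) - Real.sin (v * κ))
        * besselK ((ζ - 1) / 4) (κ ^ 2)) :
    (∀ v : ℝ, v < 0 → MeasureTheory.IntegrableOn
        (fun κ => κ ^ ((ζ - 1) / 2) * Real.exp (|v| * κ) * besselK ((ζ - 1) / 4) (κ ^ 2))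
        (Set.Ioi 0)) ∧
    Filter.Tendsto P Filter.atBot Filter.atTop ∧
    ∃ C > 0, ∃ V : ℝ, ∀ v : ℝ, v ≤ V → C * Real.exp (v ^ 2 / 8) ≤ P v := by
  have hν : (0:ℝ) < (ζ - 1) / 4 := by linarith
  have h2ν : 2 * ((ζ - 1) / 4) = (ζ - 1) / 2 := by ring
  set M : ℝ := ∫ κ in Set.Ioi (0:ℝ), κ ^ (2 * ((ζ - 1) / 4))
    * besselK ((ζ - 1) / 4) (κ ^ 2) with hMdef
  set V : ℝ := -(64 + 8 * Real.log (2*M + 2)) with hVdef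
  have claim : ∀ v : ℝ, v ≤ V → Real.exp (v ^ 2 / 8) + 1 ≤ P v := by
    intro v hv
    rw [hP v]
    have hv' : v ≤ -(64 + 8 * Real.log (2*M + 2)) := by rw [← hVdef]; exact hv
    have := P_lower hν hMdef hv'
    simpa only [h2ν] using this
  refine ⟨?_, ?_, 1, one_pos, V, ?_⟩
  · intro v _
    have := main_int hν |v|
    simpa only [h2ν] using this
  · have hg : Filter.Tendsto (fun v : ℝ => Real.exp (v ^ 2 / 8)) Filter.atBot Filter.atTop := by
      apply Real.tendsto_exp_atTop.comp
      apply Filter.Tendsto.atTop_div_const (by norm_num : (0:ℝ) < 8)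
      have h := (tendsto_pow_atTop (n := 2) two_ne_zero).comp
        (tendsto_neg_atBot_atTop (G := ℝ))
      simpa [Function.comp_def, neg_sq] using h
    apply Filter.tendsto_atTop_mono' Filter.atBot _ hg
    filter_upwards [Filter.eventually_le_atBot V] with v hv
    linarith [claim v hv]
  · intro v hv
    have := claim v hv
    linarith
end
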